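/- The graph H_4 is 4-χρ-vertex-critical; that is, χρ(H_4) = 4 and χρ(H_4 − v) < 4 for every vertex v of H_4. -/

import Mathlib

open SimpleGraph

/-- A `k`-packing coloring of `G`: colors in `{1,…,k}` and distinct vertices of equal color `i`
are at (extended, shortest-path) distance greater than `i`. -/
def IsPackingColoring {V : Type*} (G : SimpleGraph V) (k : ℕ) (c : V → ℕ) : Prop :=
  (∀ v, 1 ≤ c v ∧ c v ≤ k) ∧
    ∀ u v : V, u ≠ v → c u = c v → (c u : ℕ∞) < G.edist u v

/-- The packing chromatic number of `G`: the least `k` admitting a `k`-packing coloring. -/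
noncomputable def packingChromaticNumber {V : Type*} (G : SimpleGraph V) : ℕ :=
  sInf {k | ∃ c : V → ℕ, IsPackingColoring G k c}

/-- `G` is `4`-`χρ`-vertex-critical: `χρ(G) = 4` and deleting any vertex drops `χρ` below `4`. -/
def FourVertexCritical {V : Type*} (G : SimpleGraph V) : Prop :=
  packingChromaticNumber G = 4 ∧
    ∀ v : V, packingChromaticNumber (G.induce ({v}ᶜ : Set V)) < 4

/-- `G` contains a (not necessarily induced) subgraph isomorphic to `H`. -/
def HasCopy {W V : Type*} (H : SimpleGraph W) (G : SimpleGraph V) : Prop :=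
  ∃ f : H →g G, Function.Injective f

/-- The cycle on `n` vertices (for `n ≥ 3`). -/
def CycGraph (n : ℕ) : SimpleGraph (Fin n) :=
  SimpleGraph.fromRel (fun i j => (i.val + 1) % n = j.val)

/-- `H₄`: path `a(0)-b(1)-c(2)-d(3)-e(4)-f(5)` plus a vertex `g(6)` adjacent to `c=2` and
`d=3`. -/
def H4graph : SimpleGraph (Fin 7) :=
  SimpleGraph.fromRel (fun i j =>
    (j.val = i.val + 1 ∧ i.val ≤ 4) ∨ (i.val = 2 ∧ j.val = 6) ∨ (i.val = 3 ∧ j.val = 6))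


variable {V : Type*} (G : SimpleGraph V)

/-- `ball G n u v` : there is a walk from `u` to `v` of length at most `n`. -/
def ball : ℕ → V → V → Prop
  | 0, u, v => u = v
  | (n+1), u, v => ball n u v ∨ ∃ w, G.Adj u w ∧ ball n w v

instance ballDec [DecidableEq V] [Fintype V] [DecidableRel G.Adj] : ∀ n, DecidableRel (_root_.ball G n)
  | 0, u, v => inferInstanceAs (Decidable (u = v))
  | (n+1), u, v =>
    haveI := ballDec n
    inferInstanceAs (Decidable (_root_.ball G n u v ∨ ∃ w, G.Adj u w ∧ _root_.ball G n w v))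

lemma ball_refl : ∀ n (u : V), ball G n u u
  | 0, u => rfl
  | (n+1), u => Or.inl (ball_refl n u)

lemma edist_le_of_ball : ∀ {n : ℕ} {u v : V}, ball G n u v → G.edist u v ≤ n
  | 0, u, v, h => by cases h; simp
  | (n+1), u, v, h => by
    rcases h with h | ⟨w, hw, hb⟩
    · exact le_trans (edist_le_of_ball h) (by exact_mod_cast Nat.cast_le.mpr (Nat.le_succ n))
    · calc G.edist u v ≤ G.edist u w + G.edist w v := SimpleGraph.edist_triangle
        _ ≤ 1 + n := add_le_add (le_of_eq (edist_eq_one_iff_adj.mpr hw)) (edist_le_of_ball hb)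
        _ = ((n+1 : ℕ) : ℕ∞) := by push_cast; ring

lemma ball_of_walk : ∀ (n : ℕ) {u v : V} (p : G.Walk u v), p.length ≤ n → ball G n u v
  | 0, u, v, p, hp => by
    have : u = v := (p.eq_of_length_eq_zero (Nat.le_zero.mp hp))
    exact this ▸ ball_refl G 0 u
  | (n+1), u, v, p, hp => by
    cases p with
    | nil => exact ball_refl G (n+1) u
    | cons h q => exact Or.inr ⟨_, h, ball_of_walk n q (by simpa [Walk.length_cons, Nat.succ_le_succ_iff] using hp)⟩

lemma ball_iff_edist_le {n : ℕ} {u v : V} : ball G n u v ↔ G.edist u v ≤ n := by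
  refine ⟨edist_le_of_ball G, fun h => ?_⟩
  obtain ⟨p, hp⟩ := exists_walk_of_edist_ne_top (fun ht => ENat.coe_ne_top n (top_le_iff.mp (ht ▸ h)))
  exact ball_of_walk G n p (by exact_mod_cast hp ▸ h)

lemma isPackingColoring_iff_ball {k : ℕ} {c : V → ℕ} :
    IsPackingColoring G k c ↔
      ((∀ v, 1 ≤ c v ∧ c v ≤ k) ∧
        ∀ u v : V, u ≠ v → c u = c v → ¬ ball G (c u) u v) := by
  unfold IsPackingColoring
  refine and_congr Iff.rfl (forall₂_congr fun u v =>
    imp_congr Iff.rfl (imp_congr Iff.rfl ?_))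
  rw [ball_iff_edist_le, not_le]

lemma packing_mono {k k' : ℕ} {c : V → ℕ} (h : IsPackingColoring G k c) (hk : k ≤ k') :
    IsPackingColoring G k' c :=
  ⟨fun v => ⟨(h.1 v).1, le_trans (h.1 v).2 hk⟩, h.2⟩

lemma exists_packing_iff (k : ℕ) :
    (∃ c : V → ℕ, IsPackingColoring G k c) ↔
      ∃ c : V → Fin k, ∀ u v : V, u ≠ v → c u = c v →
        ¬ ball G ((c u).val + 1) u v := by
  constructor
  · rintro ⟨c, hc⟩
    rw [isPackingColoring_iff_ball] at hc
    have hb : ∀ v, c v - 1 < k := fun v => by have := hc.1 v; omega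
    refine ⟨fun v => ⟨c v - 1, hb v⟩, fun u v huv hcc => ?_⟩
    simp only [Fin.mk.injEq] at hcc
    have h1u := (hc.1 u).1
    have h1v := (hc.1 v).1
    have hcuv : c u = c v := by omega
    have : (c u - 1) + 1 = c u := by omega
    rw [this]
    exact hc.2 u v huv hcuv
  · rintro ⟨c, hc⟩
    refine ⟨fun v => (c v).val + 1, (isPackingColoring_iff_ball _).mpr
      ⟨fun v => ⟨by omega, by have := (c v).isLt; omega⟩, fun u v huv hcc => ?_⟩⟩
    have : c u = c v := by
      have := Nat.succ_injective hcc; exact Fin.ext this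
    exact hc u v huv this

instance : DecidableRel H4graph.Adj := fun a b =>
  decidable_of_iff _ (SimpleGraph.fromRel_adj _ a b).symm

instance induceDecAdj (s : Set V) [DecidableRel G.Adj] :
    DecidableRel (G.induce s).Adj := fun a b =>
  decidable_of_iff (G.Adj a.1 b.1) (by simp)

set_option maxRecDepth 100000 in
lemma no3 : ∀ a b c d e f g : Fin 3,
    ¬ (∀ u v : Fin 7, u ≠ v → (![a,b,c,d,e,f,g] : Fin 7 → Fin 3) u = ![a,b,c,d,e,f,g] v →
      ¬ ball H4graph ((![a,b,c,d,e,f,g] u).val + 1) u v) := by decide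

set_option maxRecDepth 100000 in
theorem H4_fourVertexCritical : FourVertexCritical H4graph := by
  constructor
  · have h4 : (4:ℕ) ∈ {k | ∃ c : Fin 7 → ℕ, IsPackingColoring H4graph k c} :=
      ⟨![1,2,1,3,1,2,4], (isPackingColoring_iff_ball _).mpr (by decide)⟩
    have h3 : ¬ ∃ c : Fin 7 → ℕ, IsPackingColoring H4graph 3 c := by
      rw [exists_packing_iff]
      rintro ⟨c, hc⟩
      refine no3 (c 0) (c 1) (c 2) (c 3) (c 4) (c 5) (c 6) (fun u v h1 h2 hb => ?_)
      have hM : ∀ u : Fin 7, (![c 0,c 1,c 2,c 3,c 4,c 5,c 6] : Fin 7 → Fin 3) u = c u := by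
        intro u; fin_cases u <;> rfl
      have hb2 : ball H4graph ((c u).val + 1) u v := by rw [← hM u]; exact hb
      exact hc u v h1 (by rw [← hM u, ← hM v]; exact h2) hb2
    refine le_antisymm (Nat.sInf_le h4) ?_
    by_contra hlt
    push_neg at hlt
    obtain ⟨c, hc⟩ := Nat.sInf_mem (⟨4, h4⟩ :
      Set.Nonempty {k | ∃ c : Fin 7 → ℕ, IsPackingColoring H4graph k c})
    exact h3 ⟨c, packing_mono _ hc (by unfold packingChromaticNumber at hlt; omega)⟩
  · intro v
    apply Nat.lt_succ_of_le
    apply Nat.sInf_le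
    fin_cases v
    · exact ⟨fun x => ![1,1,2,3,1,2,1] x.1, (isPackingColoring_iff_ball _).mpr (by decide)⟩
    · exact ⟨fun x => ![1,1,1,3,1,2,2] x.1, (isPackingColoring_iff_ball _).mpr (by decide)⟩
    · exact ⟨fun x => ![1,2,1,1,2,1,3] x.1, (isPackingColoring_iff_ball _).mpr (by decide)⟩
    · exact ⟨fun x => ![1,2,1,1,1,2,3] x.1, (isPackingColoring_iff_ball _).mpr (by decide)⟩
    · exact ⟨fun x => ![2,1,3,1,1,1,2] x.1, (isPackingColoring_iff_ball _).mpr (by decide)⟩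
    · exact ⟨fun x => ![2,1,3,2,1,1,1] x.1, (isPackingColoring_iff_ball _).mpr (by decide)⟩
    · exact ⟨fun x => ![1,2,1,3,1,2,1] x.1, (isPackingColoring_iff_ball _).mpr (by decide)⟩
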